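/- Let H: ℝ^{2d} → ℝ be continuously differentiable, f(z) = J⁻¹ ∇H(z), and let A(τ,σ) = Σ_{ι=0}^{N} ω_ι (∫₀^τ P_ι(x) dx) P_ι(σ) with ω₀ = 1, where P_ι are the normalized shifted Legendre polynomials on [0,1]. Suppose Z: [0,1] → ℝ^{2d} is continuously differentiable and satisfies Z(τ) = z₀ + h ∫₀¹ A(τ,σ) f(Z(σ)) dσ for all τ, and z₁ = z₀ + h ∫₀¹ f(Z(τ)) dτ. Then Z(0) = z₀, Z(1) = z₁, and H(z₁) = H(z₀). -/

import Mathlib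

open Matrix

/-- The ι-th normalized shifted Legendre polynomial on [0,1], via Rodrigues' formula. -/
noncomputable def legP (ι : ℕ) (x : ℝ) : ℝ :=
  (Real.sqrt (2 * ι + 1) / (Nat.factorial ι)) *
    iteratedDeriv ι (fun y : ℝ => y ^ ι * (y - 1) ^ ι) x

open Polynomial in
private lemma iteratedDeriv_polyeval (p : Polynomial ℝ) (n : ℕ) :
    iteratedDeriv n (fun x => p.eval x) = fun x => (derivative^[n] p).eval x := by
  induction n with
  | zero => simp
  | succ n ih =>
    rw [iteratedDeriv_succ, ih]
    funext x
    rw [Function.iterate_succ_apply']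
    exact Polynomial.deriv _

open Polynomial in
private lemma legP_eq_eval (ι : ℕ) (x : ℝ) :
    legP ι x = (Real.sqrt (2 * ι + 1) / (Nat.factorial ι)) *
      (derivative^[ι] (X ^ ι * (X - C 1) ^ ι : Polynomial ℝ)).eval x := by
  have h1 : (fun y : ℝ => y ^ ι * (y - 1) ^ ι)
      = fun y : ℝ => (X ^ ι * (X - C 1) ^ ι : Polynomial ℝ).eval y := by
    funext y; simp
  rw [legP, h1, iteratedDeriv_polyeval]

open Polynomial in
private lemma legP_continuous (ι : ℕ) : Continuous (legP ι) := by
  have h1 : legP ι = fun x => (Real.sqrt (2 * ι + 1) / (Nat.factorial ι)) *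
      (derivative^[ι] (X ^ ι * (X - C 1) ^ ι : Polynomial ℝ)).eval x :=
    funext (legP_eq_eval ι)
  rw [h1]
  exact continuous_const.mul (Polynomial.continuous _)

private lemma legP_zero (x : ℝ) : legP 0 x = 1 := by
  simp [legP]

open Polynomial intervalIntegral in
private lemma integral_legP (ι : ℕ) :
    (∫ x in (0:ℝ)..1, legP ι x) = if ι = 0 then 1 else 0 := by
  rcases ι with _ | k
  · simp [legP_zero]
  · simp only [Nat.succ_ne_zero, if_false]
    set q : Polynomial ℝ := X ^ (k + 1) * (X - C 1) ^ (k + 1) with hq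
    set c : ℝ := Real.sqrt (2 * (k + 1 : ℕ) + 1) / (Nat.factorial (k + 1)) with hcdef
    have heq : ∀ x : ℝ, legP (k + 1) x
        = c * deriv (fun y => (derivative^[k] q).eval y) x := by
      intro x
      rw [legP_eq_eval]
      congr 1
      rw [Polynomial.deriv, Function.iterate_succ_apply']
    have hd : ∀ x ∈ Set.uIcc (0:ℝ) 1,
        DifferentiableAt ℝ (fun y => (derivative^[k] q).eval y) x :=
      fun x _ => Polynomial.differentiableAt _
    have hdeq : deriv (fun y => (derivative^[k] q).eval y)
        = fun x => (derivative (derivative^[k] q)).eval x :=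
      funext fun x => Polynomial.deriv _
    have hcont : Continuous (deriv (fun y => (derivative^[k] q).eval y)) := by
      rw [hdeq]; exact Polynomial.continuous _
    have h1 : (derivative^[k] q).eval 1 = 0 := by
      obtain ⟨r, hr⟩ := Polynomial.pow_sub_dvd_iterate_derivative_of_pow_dvd k
        (dvd_mul_left ((X - C 1) ^ (k + 1)) (X ^ (k + 1)) : (X - C 1) ^ (k + 1) ∣ q)
      have hk : k + 1 - k = 1 := by omega
      rw [hr, hk]
      simp
    have h0 : (derivative^[k] q).eval 0 = 0 := by
      obtain ⟨r, hr⟩ := Polynomial.pow_sub_dvd_iterate_derivative_of_pow_dvd k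
        (dvd_mul_right (X ^ (k + 1)) ((X - C 1) ^ (k + 1)) : (X : Polynomial ℝ) ^ (k + 1) ∣ q)
      have hk : k + 1 - k = 1 := by omega
      rw [hr, hk]
      simp
    calc ∫ x in (0:ℝ)..1, legP (k + 1) x
        = c * ∫ x in (0:ℝ)..1, deriv (fun y => (derivative^[k] q).eval y) x := by
          simp_rw [heq]; exact intervalIntegral.integral_const_mul c _
      _ = c * ((derivative^[k] q).eval 1 - (derivative^[k] q).eval 0) := by
          rw [intervalIntegral.integral_deriv_eq_sub hd (hcont.intervalIntegrable _ _)]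
      _ = 0 := by rw [h1, h0]; ring

/-- The csRK method with B ≡ 1, C_τ = τ and
A(τ,σ) = Σ_{ι=0}^{N} ω_ι (∫₀^τ P_ι) P_ι(σ), ω₀ = 1, applied to a Hamiltonian
system ż = J⁻¹∇H(z), satisfies Z(0) = z₀, Z(1) = z₁ and preserves the energy:
H(z₁) = H(z₀). -/
theorem csRK_energy_preserving
    (d : ℕ) (h : ℝ)
    (H : (Fin d ⊕ Fin d → ℝ) → ℝ) (hH : ContDiff ℝ 1 H)
    (gradH : (Fin d ⊕ Fin d → ℝ) → (Fin d ⊕ Fin d → ℝ))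
    (hgrad : ∀ z i, gradH z i = fderiv ℝ H z (Pi.single i 1))
    (J : Matrix (Fin d ⊕ Fin d) (Fin d ⊕ Fin d) ℝ)
    (hJ : J = Matrix.fromBlocks 0 1 (-1) 0)
    (f : (Fin d ⊕ Fin d → ℝ) → (Fin d ⊕ Fin d → ℝ))
    (hf : ∀ z, f z = J⁻¹ *ᵥ gradH z)
    (N : ℕ) (ω : ℕ → ℝ) (hω0 : ω 0 = 1)
    (A : ℝ → ℝ → ℝ)
    (hA : ∀ τ σ : ℝ, A τ σ =
      ∑ ι ∈ Finset.range (N + 1), ω ι * (∫ x in (0:ℝ)..τ, legP ι x) * legP ι σ)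
    (Z : ℝ → (Fin d ⊕ Fin d → ℝ)) (hZ : ContDiff ℝ 1 Z)
    (z₀ z₁ : Fin d ⊕ Fin d → ℝ)
    (hstage : ∀ τ : ℝ, Z τ = z₀ + h • ∫ σ in (0:ℝ)..1, A τ σ • f (Z σ))
    (hz₁ : z₁ = z₀ + h • ∫ τ in (0:ℝ)..1, f (Z τ)) :
    Z 0 = z₀ ∧ Z 1 = z₁ ∧ H z₁ = H z₀ := by
  classical
  have hZc : Continuous Z := hZ.continuous
  have hgradeq : gradH = fun z i => (fderiv ℝ H z) (Pi.single i 1) := by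
    funext z i; exact hgrad z i
  have hfderivc : Continuous (fderiv ℝ H) := hH.continuous_fderiv one_ne_zero
  have hgradc : Continuous gradH := by
    rw [hgradeq]
    exact continuous_pi fun i => hfderivc.clm_apply continuous_const
  have hmulc : Continuous fun v : Fin d ⊕ Fin d → ℝ => J⁻¹ *ᵥ v := by
    refine continuous_pi fun i => ?_
    simp only [Matrix.mulVec, dotProduct]
    exact continuous_finset_sum _ fun j _ => continuous_const.mul (continuous_apply j)
  have hfeq : f = fun z => J⁻¹ *ᵥ gradH z := funext hf
  have hfc : Continuous f := by rw [hfeq]; exact hmulc.comp hgradc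
  have hFc : Continuous fun τ => f (Z τ) := hfc.comp hZc
  have hGc : Continuous fun τ => gradH (Z τ) := hgradc.comp hZc
  have hcontF : ∀ j, Continuous fun τ => f (Z τ) j :=
    fun j => (continuous_apply j).comp hFc
  have hcontG : ∀ j, Continuous fun τ => gradH (Z τ) j :=
    fun j => (continuous_apply j).comp hGc
  set v : ℕ → (Fin d ⊕ Fin d → ℝ) :=
    fun ι => ∫ σ in (0:ℝ)..1, legP ι σ • f (Z σ) with hv
  have hint : ∀ ι, IntervalIntegrable (fun σ => legP ι σ • f (Z σ))
      MeasureTheory.volume 0 1 :=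
    fun ι => ((legP_continuous ι).smul hFc).intervalIntegrable 0 1
  have key : ∀ τ : ℝ, Z τ = z₀ + h • ∑ ι ∈ Finset.range (N + 1),
      (ω ι * ∫ x in (0:ℝ)..τ, legP ι x) • v ι := by
    intro τ
    rw [hstage τ]
    have h2 : (∫ σ in (0:ℝ)..1, A τ σ • f (Z σ))
        = ∑ ι ∈ Finset.range (N + 1),
            (ω ι * ∫ x in (0:ℝ)..τ, legP ι x) • v ι := by
      have h1 : (fun σ => A τ σ • f (Z σ))
          = fun σ => ∑ ι ∈ Finset.range (N + 1),
              (ω ι * ∫ x in (0:ℝ)..τ, legP ι x) • (legP ι σ • f (Z σ)) := by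
        funext σ
        rw [hA, Finset.sum_smul]
        exact Finset.sum_congr rfl fun ι _ => (smul_smul _ _ _).symm
      rw [h1, intervalIntegral.integral_finset_sum]
      · exact Finset.sum_congr rfl fun ι _ => intervalIntegral.integral_smul _ _
      · exact fun ι _ =>
          (continuous_const.fun_smul ((legP_continuous ι).fun_smul hFc)).intervalIntegrable 0 1
    rw [h2]
  have hZ0 : Z 0 = z₀ := by
    rw [key 0]; simp
  have hZ1 : Z 1 = z₁ := by
    rw [key 1, hz₁]
    have hsum : (∑ ι ∈ Finset.range (N + 1),
        (ω ι * ∫ x in (0:ℝ)..1, legP ι x) • v ι) = ∫ τ in (0:ℝ)..1, f (Z τ) := by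
      rw [Finset.sum_eq_single 0]
      · rw [integral_legP]
        simp only [if_pos rfl, hω0, one_mul, mul_one, one_smul, hv]
        simp [legP_zero]
      · intro ι _ hne
        rw [integral_legP, if_neg hne]
        simp
      · intro habs
        exact absurd (Finset.mem_range.mpr (Nat.succ_pos N)) habs
    rw [hsum]
  refine ⟨hZ0, hZ1, ?_⟩
  -- energy preservation
  have hcder : ∀ (ι : ℕ) (τ : ℝ),
      HasDerivAt (fun t => ω ι * ∫ x in (0:ℝ)..t, legP ι x) (ω ι * legP ι τ) τ := by
    intro ι τ
    have hfd : HasDerivAt (fun t => ∫ x in (0:ℝ)..t, legP ι x) (legP ι τ) τ :=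
      intervalIntegral.integral_hasDerivAt_right
        ((legP_continuous ι).intervalIntegrable 0 τ)
        ((legP_continuous ι).stronglyMeasurableAtFilter _ _)
        (legP_continuous ι).continuousAt
    exact hfd.const_mul (ω ι)
  have hZeq : Z = fun τ => z₀ + h • ∑ ι ∈ Finset.range (N + 1),
      (ω ι * ∫ x in (0:ℝ)..τ, legP ι x) • v ι := funext key
  have hgd : ∀ τ : ℝ, HasDerivAt Z
      (h • ∑ ι ∈ Finset.range (N + 1), (ω ι * legP ι τ) • v ι) τ := by
    intro τ
    rw [hZeq]
    have hs : HasDerivAt (fun t => ∑ ι ∈ Finset.range (N + 1),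
          (ω ι * ∫ x in (0:ℝ)..t, legP ι x) • v ι)
        (∑ ι ∈ Finset.range (N + 1), (ω ι * legP ι τ) • v ι) τ :=
      HasDerivAt.fun_sum fun ι _ => (hcder ι τ).smul_const (v ι)
    exact (hs.const_smul h).const_add z₀
  have hHdiff : Differentiable ℝ H := hH.differentiable one_ne_zero
  have hHZder : ∀ τ : ℝ, HasDerivAt (fun t => H (Z t))
      ((fderiv ℝ H (Z τ))
        (h • ∑ ι ∈ Finset.range (N + 1), (ω ι * legP ι τ) • v ι)) τ :=
    fun τ => ((hHdiff (Z τ)).hasFDerivAt).comp_hasDerivAt τ (hgd τ)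
  set D : ℝ → ℝ := fun τ => (fderiv ℝ H (Z τ))
    (h • ∑ ι ∈ Finset.range (N + 1), (ω ι * legP ι τ) • v ι) with hD
  have hDc : Continuous D := by
    apply (hfderivc.comp hZc).clm_apply
    exact continuous_const.fun_smul (continuous_finset_sum _ fun ι _ =>
      (continuous_const.fun_mul (legP_continuous ι)).fun_smul continuous_const)
  have hderiv_eq : deriv (fun t => H (Z t)) = D := funext fun τ => (hHZder τ).deriv
  have hftc : (∫ τ in (0:ℝ)..1, D τ) = H (Z 1) - H (Z 0) := by
    have := intervalIntegral.integral_deriv_eq_sub (f := fun t => H (Z t)) (a := 0) (b := 1)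
      (fun τ _ => (hHZder τ).differentiableAt)
      (by rw [hderiv_eq]; exact hDc.intervalIntegrable 0 1)
    rw [hderiv_eq] at this
    exact this
  -- expansion of the differential in coordinates
  have hLexp : ∀ z (w : Fin d ⊕ Fin d → ℝ),
      (fderiv ℝ H z) w = ∑ i, w i * gradH z i := by
    intro z w
    conv_lhs => rw [← Finset.univ_sum_single w]
    rw [map_sum]
    refine Finset.sum_congr rfl fun i _ => ?_
    rw [hgrad]
    have hsingle : Pi.single i (w i) = w i • (Pi.single i (1:ℝ) : Fin d ⊕ Fin d → ℝ) := by
      rw [← Pi.single_smul, smul_eq_mul, mul_one]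
    rw [hsingle, _root_.map_smul, smul_eq_mul]
  -- components of v
  have hvapp : ∀ ι i, v ι i = ∫ σ in (0:ℝ)..1, legP ι σ * f (Z σ) i := by
    intro ι i
    have hcc := (ContinuousLinearMap.proj (R := ℝ)
      (φ := fun _ : Fin d ⊕ Fin d => ℝ) i).intervalIntegral_comp_comm (hint ι)
    simp only [ContinuousLinearMap.proj_apply, Pi.smul_apply, smul_eq_mul] at hcc
    rw [hv]
    exact hcc.symm
  set u : ℕ → (Fin d ⊕ Fin d → ℝ) :=
    fun ι i => ∫ τ in (0:ℝ)..1, legP ι τ * gradH (Z τ) i with hu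
  have hvu : ∀ ι, v ι = J⁻¹ *ᵥ u ι := by
    intro ι
    funext i
    rw [hvapp]
    have hexp : ∀ σ : ℝ, legP ι σ * f (Z σ) i
        = ∑ j, J⁻¹ i j * (legP ι σ * gradH (Z σ) j) := by
      intro σ
      rw [hf]
      simp only [Matrix.mulVec, dotProduct]
      rw [Finset.mul_sum]
      exact Finset.sum_congr rfl fun j _ => by ring
    simp_rw [hexp]
    rw [intervalIntegral.integral_finset_sum (fun j _ =>
      (continuous_const.fun_mul ((legP_continuous ι).fun_mul (hcontG j))).intervalIntegrable 0 1)]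
    simp_rw [intervalIntegral.integral_const_mul]
    simp [Matrix.mulVec, dotProduct, hu]
  -- the integral of D
  have hDeq : ∀ τ : ℝ, D τ = h * ∑ ι ∈ Finset.range (N + 1),
      ω ι * (legP ι τ * ∑ i, v ι i * gradH (Z τ) i) := by
    intro τ
    simp only [hD]
    rw [_root_.map_smul, smul_eq_mul, map_sum]
    congr 1
    refine Finset.sum_congr rfl fun ι _ => ?_
    rw [_root_.map_smul, smul_eq_mul, hLexp, mul_assoc]
  have hID : (∫ τ in (0:ℝ)..1, D τ) = h * ∑ ι ∈ Finset.range (N + 1),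
      ω ι * ∑ i, v ι i * u ι i := by
    calc (∫ τ in (0:ℝ)..1, D τ)
        = ∫ τ in (0:ℝ)..1, h * ∑ ι ∈ Finset.range (N + 1),
            ω ι * (legP ι τ * ∑ i, v ι i * gradH (Z τ) i) := by simp_rw [hDeq]
      _ = h * ∑ ι ∈ Finset.range (N + 1), ω ι * ∑ i, v ι i * u ι i := by
          rw [intervalIntegral.integral_const_mul]
          congr 1
          rw [intervalIntegral.integral_finset_sum (fun ι _ =>
            (continuous_const.fun_mul ((legP_continuous ι).fun_mul
              (continuous_finset_sum _ fun i _ =>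
                continuous_const.fun_mul (hcontG i)))).intervalIntegrable 0 1)]
          refine Finset.sum_congr rfl fun ι _ => ?_
          rw [intervalIntegral.integral_const_mul]
          congr 1
          have hexp2 : ∀ τ : ℝ, legP ι τ * ∑ i, v ι i * gradH (Z τ) i
              = ∑ i, v ι i * (legP ι τ * gradH (Z τ) i) := by
            intro τ
            rw [Finset.mul_sum]
            exact Finset.sum_congr rfl fun i _ => by ring
          simp_rw [hexp2]
          rw [intervalIntegral.integral_finset_sum (fun i _ =>
            (continuous_const.fun_mul ((legP_continuous ι).fun_mul (hcontG i))).intervalIntegrable 0 1)]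
          simp_rw [intervalIntegral.integral_const_mul]
          rfl
  -- skew-symmetry kills each term
  have hJinv : J⁻¹ = -J := by
    rw [hJ]
    refine Matrix.inv_eq_right_inv ?_
    rw [Matrix.fromBlocks_neg, Matrix.fromBlocks_multiply]
    simp [Matrix.fromBlocks_one]
  have hskew : (J⁻¹)ᵀ = -(J⁻¹) := by
    rw [hJinv, hJ]
    ext i j
    rcases i with i | i <;> rcases j with j | j <;>
      simp [Matrix.fromBlocks, Matrix.one_apply, eq_comm]
  have hzero : ∀ ι, (∑ i, v ι i * u ι i) = 0 := by
    intro ι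
    have hdot : (∑ i, v ι i * u ι i) = (J⁻¹ *ᵥ u ι) ⬝ᵥ u ι := by
      rw [hvu ι]; rfl
    have e1 : (J⁻¹ *ᵥ u ι) ⬝ᵥ u ι = u ι ⬝ᵥ (J⁻¹ *ᵥ u ι) := dotProduct_comm _ _
    have e2 : u ι ⬝ᵥ (J⁻¹ *ᵥ u ι) = ((J⁻¹)ᵀ *ᵥ u ι) ⬝ᵥ u ι := by
      rw [Matrix.dotProduct_mulVec, Matrix.mulVec_transpose]
    have e3 : ((J⁻¹)ᵀ *ᵥ u ι) ⬝ᵥ u ι = -((J⁻¹ *ᵥ u ι) ⬝ᵥ u ι) := by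
      rw [hskew, Matrix.neg_mulVec, neg_dotProduct]
    have : (J⁻¹ *ᵥ u ι) ⬝ᵥ u ι = 0 := by
      have := e1.trans (e2.trans e3)
      linarith
    rw [hdot, this]
  have hfinal : (∫ τ in (0:ℝ)..1, D τ) = 0 := by
    rw [hID]
    have : ∀ ι ∈ Finset.range (N + 1), ω ι * ∑ i, v ι i * u ι i = 0 := by
      intro ι _
      rw [hzero ι, mul_zero]
    rw [Finset.sum_congr rfl this]
    simp
  rw [hfinal] at hftc
  rw [hZ0, hZ1] at hftc
  linarith
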